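/- Let (Ω, Σ, μ) be a semifinite, decomposable measure space with μ ≠ 0 and let 𝒰 be an ultrafilter on the measure algebra of (Ω, μ). Then for every measurable essentially bounded f : Ω → ℂ there exists a ∈ ℂ such that lim_𝒰 f = a. -/

import Mathlib

open MeasureTheory

/-- An *ultrafilter on the measure algebra* of `(Ω, μ)`: a collection of measurable,
non-null subsets of `Ω`, closed under intersection and under almost-everywhere
enlargement, containing every measurable set or its complement. -/
structure IsMeasureUltrafilter {Ω : Type*} [MeasurableSpace Ω] (μ : Measure Ω)
    (U : Set (Set Ω)) : Prop where
  measurableSet_of_mem : ∀ F ∈ U, MeasurableSet F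
  not_null : ∀ F ∈ U, μ F ≠ 0
  inter_mem : ∀ F ∈ U, ∀ G ∈ U, F ∩ G ∈ U
  mem_of_ae_subset : ∀ F ∈ U, ∀ G : Set Ω, MeasurableSet G → μ (F \ G) = 0 → G ∈ U
  mem_or_compl_mem : ∀ F : Set Ω, MeasurableSet F → F ∈ U ∨ Fᶜ ∈ U

/-- `UltraLim μ U f a` means `lim_U f = a`: for every `ε > 0` there is `F ∈ U` such that
all averages of `f` over measurable subsets of `F` of finite positive measure are within
`ε` of `a`. -/
def UltraLim {Ω : Type*} [MeasurableSpace Ω] (μ : Measure Ω) (U : Set (Set Ω))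
    (f : Ω → ℂ) (a : ℂ) : Prop :=
  ∀ ε : ℝ, 0 < ε → ∃ F ∈ U, ∀ X : Set Ω, X ⊆ F → MeasurableSet X →
    0 < μ X → μ X < ⊤ → ‖(μ X).toReal⁻¹ • ∫ x in X, f x ∂μ - a‖ < ε

/-- A measure is *semifinite* if every measurable set of infinite measure contains a
measurable subset of finite positive measure. -/
def Semifinite {Ω : Type*} [MeasurableSpace Ω] (μ : Measure Ω) : Prop :=
  ∀ E : Set Ω, MeasurableSet E → μ E = ⊤ →
    ∃ F : Set Ω, F ⊆ E ∧ MeasurableSet F ∧ 0 < μ F ∧ μ F < ⊤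

universe u

/-- A measure is *decomposable* if there is a partition of `Ω` into measurable sets of
finite measure which detects measurability and along which `μ` sums. -/
def Decomposable {Ω : Type u} [MeasurableSpace Ω] (μ : Measure Ω) : Prop :=
  ∃ (ι : Type u) (P : ι → Set Ω),
    (∀ i, MeasurableSet (P i)) ∧ (∀ i, μ (P i) < ⊤) ∧
    (Pairwise fun i j => Disjoint (P i) (P j)) ∧
    (⋃ i, P i) = Set.univ ∧
    (∀ E : Set Ω, (∀ i, MeasurableSet (E ∩ P i)) → MeasurableSet E) ∧
    (∀ E : Set Ω, MeasurableSet E → μ E = ∑' i, μ (E ∩ P i))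

section Aux

variable {Ω : Type u} [MeasurableSpace Ω] {μ : Measure Ω} {U : Set (Set Ω)}

lemma IsMeasureUltrafilter.mem_of_subset (hU : IsMeasureUltrafilter μ U)
    {F G : Set Ω} (hF : F ∈ U) (hG : MeasurableSet G) (hFG : F ⊆ G) : G ∈ U :=
  hU.mem_of_ae_subset F hF G hG (by simp [Set.diff_eq_empty.2 hFG])

lemma IsMeasureUltrafilter.univ_mem (hU : IsMeasureUltrafilter μ U) :
    Set.univ ∈ U := by
  rcases hU.mem_or_compl_mem ∅ MeasurableSet.empty with h | h
  · exact absurd (by simp) (hU.not_null ∅ h)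
  · simpa using h

/-- Key real-valued step: a bounded measurable real function has, for each `ε`, a member
of the ultrafilter on which it is within `ε` of a fixed value `a`. -/
lemma exists_ultralim_real (hU : IsMeasureUltrafilter μ U)
    {g : Ω → ℝ} (hg : Measurable g) {B : Set Ω} (hB : B ∈ U) {C : ℝ}
    (hC : ∀ x ∈ B, |g x| ≤ C) :
    ∃ a : ℝ, ∀ ε : ℝ, 0 < ε → ∃ F ∈ U, F ⊆ B ∧ ∀ x ∈ F, |g x - a| ≤ ε := by
  have hBmeas : MeasurableSet B := hU.measurableSet_of_mem B hB
  set T : Set ℝ := {t : ℝ | B ∩ {x | t ≤ g x} ∈ U} with hT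
  have hTne : (-C) ∈ T := by
    have : B ∩ {x | -C ≤ g x} = B := by
      apply Set.inter_eq_self_of_subset_left
      intro x hx
      exact (abs_le.1 (hC x hx)).1
    simpa [hT, this] using hB
  have hTbdd : ∀ t ∈ T, t ≤ C := by
    intro t ht
    by_contra hlt
    push_neg at hlt
    have hempty : B ∩ {x | t ≤ g x} = ∅ := by
      ext x
      simp only [Set.mem_inter_iff, Set.mem_setOf_eq, Set.mem_empty_iff_false, iff_false]
      rintro ⟨hxB, hxg⟩
      exact absurd (le_trans hxg ((abs_le.1 (hC x hxB)).2)) (not_le.2 hlt)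
    have := hU.not_null _ ht
    rw [hempty] at this
    simp at this
  have hTbdd' : BddAbove T := ⟨C, fun t ht => hTbdd t ht⟩
  set a := sSup T with ha
  refine ⟨a, fun ε hε => ?_⟩
  -- F₁ : g ≥ a - ε
  have hF1 : B ∩ {x | a - ε ≤ g x} ∈ U := by
    obtain ⟨t, htT, hta⟩ := exists_lt_of_lt_csSup ⟨-C, hTne⟩ (show a - ε < a by linarith)
    refine hU.mem_of_subset htT ?_ ?_
    · exact hBmeas.inter (measurableSet_le measurable_const hg)
    · exact Set.inter_subset_inter_right B (fun x hx => le_trans hta.le hx)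
  -- F₂ : g ≤ a + ε
  have hF2 : B ∩ {x | g x ≤ a + ε} ∈ U := by
    by_contra hnot
    have hmeas2 : MeasurableSet (B ∩ {x | g x ≤ a + ε}) :=
      hBmeas.inter (measurableSet_le hg measurable_const)
    rcases hU.mem_or_compl_mem _ hmeas2 with h | h
    · exact hnot h
    · have hmem : (B ∩ {x | g x ≤ a + ε})ᶜ ∩ B ∈ U := hU.inter_mem _ h _ hB
      have hsub : (B ∩ {x | g x ≤ a + ε})ᶜ ∩ B ⊆ B ∩ {x | a + ε ≤ g x} := by
        intro x hx
        rcases hx with ⟨hxc, hxB⟩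
        refine ⟨hxB, ?_⟩
        rw [Set.mem_compl_iff, Set.mem_inter_iff, not_and_or] at hxc
        rcases hxc with h1 | h1
        · exact absurd hxB h1
        · simp only [Set.mem_setOf_eq, not_le] at h1
          exact h1.le
      have hmemT : (a + ε) ∈ T :=
        hU.mem_of_subset hmem (hBmeas.inter (measurableSet_le measurable_const hg)) hsub
      have := le_csSup hTbdd' hmemT
      linarith
  refine ⟨_, hU.inter_mem _ hF1 _ hF2, fun x hx => hx.1.1, fun x hx => ?_⟩
  rcases hx with ⟨⟨_, h1⟩, ⟨_, h2⟩⟩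
  rw [abs_le]
  constructor <;> [linarith [Set.mem_setOf_eq ▸ h1]; linarith [Set.mem_setOf_eq ▸ h2]]

end Aux

/-- Theorem II.3. Existence of ultrafilter limits: on a nonzero,
semifinite, decomposable measure space, every measurable essentially bounded function has a
limit along any ultrafilter on the measure algebra. -/
theorem ultraLim_exists {Ω : Type u} [MeasurableSpace Ω] (μ : Measure Ω)
    (hμ : μ ≠ 0) (hsemi : Semifinite μ) (hdec : Decomposable μ)
    (U : Set (Set Ω)) (hU : IsMeasureUltrafilter μ U)
    (f : Ω → ℂ) (hf : Measurable f) (hbdd : ∃ C : ℝ, ∀ᵐ ω ∂μ, ‖f ω‖ ≤ C) :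
    ∃ a : ℂ, UltraLim μ U f a := by
  obtain ⟨C, hCae⟩ := hbdd
  -- The set where `f` is bounded by `C` is in the ultrafilter.
  set B : Set Ω := {x | ‖f x‖ ≤ C} with hBdef
  have hBmeas : MeasurableSet B := measurableSet_le hf.norm measurable_const
  have hBnull : μ (Set.univ \ B) = 0 := by
    have : Set.univ \ B = Bᶜ := by simp [Set.diff_eq]
    rw [this]
    exact hCae
  have hB : B ∈ U := hU.mem_of_ae_subset _ hU.univ_mem B hBmeas hBnull
  have hCre : ∀ x ∈ B, |(f x).re| ≤ C := fun x hx => le_trans (Complex.abs_re_le_norm _) hx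
  have hCim : ∀ x ∈ B, |(f x).im| ≤ C := fun x hx => le_trans (Complex.abs_im_le_norm _) hx
  obtain ⟨a₁, ha₁⟩ := exists_ultralim_real hU (Complex.measurable_re.comp hf) hB hCre
  obtain ⟨a₂, ha₂⟩ := exists_ultralim_real hU (Complex.measurable_im.comp hf) hB hCim
  refine ⟨⟨a₁, a₂⟩, fun ε hε => ?_⟩
  have hε3 : 0 < ε / 3 := by linarith
  obtain ⟨F₁, hF₁U, hF₁B, hF₁⟩ := ha₁ (ε / 3) hε3
  obtain ⟨F₂, hF₂U, hF₂B, hF₂⟩ := ha₂ (ε / 3) hε3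
  refine ⟨F₁ ∩ F₂, hU.inter_mem _ hF₁U _ hF₂U, fun X hXF hXm hX0 hXtop => ?_⟩
  set a : ℂ := ⟨a₁, a₂⟩ with hadef
  -- pointwise bound on `X`
  have hpt : ∀ x ∈ X, ‖f x - a‖ ≤ 2 * (ε / 3) := by
    intro x hx
    calc ‖f x - a‖ ≤ |(f x - a).re| + |(f x - a).im| := Complex.norm_le_abs_re_add_abs_im _
      _ = |(f x).re - a₁| + |(f x).im - a₂| := by simp [hadef, Complex.sub_re, Complex.sub_im]
      _ ≤ ε / 3 + ε / 3 := add_le_add (hF₁ x (hXF hx).1) (hF₂ x (hXF hx).2)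
      _ = 2 * (ε / 3) := by ring
  -- integrability of `f` on `X`
  have hfint : IntegrableOn f X μ := by
    apply Measure.integrableOn_of_bounded (M := C) hXtop.ne hf.aestronglyMeasurable
    filter_upwards [ae_restrict_mem hXm] with x hx
    exact hXF hx |>.1 |> hF₁B
  have haint : IntegrableOn (fun _ => a) X μ := by
    exact integrableOn_const hXtop.ne (by simp)
  have hsub : ∫ x in X, (f x - a) ∂μ = (∫ x in X, f x ∂μ) - (μ X).toReal • a := by
    rw [integral_sub hfint haint, setIntegral_const, measureReal_def]
  have hbound : ‖∫ x in X, (f x - a) ∂μ‖ ≤ 2 * (ε / 3) * (μ X).toReal :=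
    by have := norm_setIntegral_le_of_norm_le_const hXtop hpt; rwa [measureReal_def] at this
  have htR : (0:ℝ) < (μ X).toReal := ENNReal.toReal_pos hX0.ne' hXtop.ne
  have key : ‖(μ X).toReal⁻¹ • ∫ x in X, f x ∂μ - a‖ ≤ 2 * (ε / 3) := by
    have : (μ X).toReal⁻¹ • ∫ x in X, f x ∂μ - a
        = (μ X).toReal⁻¹ • ((∫ x in X, f x ∂μ) - (μ X).toReal • a) := by
      rw [smul_sub, smul_smul, inv_mul_cancel₀ htR.ne', one_smul]
    rw [this, ← hsub, norm_smul]
    calc ‖(μ X).toReal⁻¹‖ * ‖∫ x in X, (f x - a) ∂μ‖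
        ≤ ‖(μ X).toReal⁻¹‖ * (2 * (ε / 3) * (μ X).toReal) := by
          exact mul_le_mul_of_nonneg_left hbound (norm_nonneg _)
      _ = 2 * (ε / 3) := by
          rw [Real.norm_eq_abs, abs_of_pos (inv_pos.2 htR)]
          field_simp
  linarith
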